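/- Let n ≥ 3 be odd, let ρ ∈ S_n, and define π ∈ S_{2n} by π_i = 2ρ_i − 1 if i is odd and π_i = 2ρ_i if i is even, for 1 ≤ i ≤ 2n, where ρ_{i+n} := ρ_i. Then π is a well-defined permutation of [2n], and for all 1 ≤ i ≤ n one has π̂_{2i−1} = 2ρ̂_i and π̂_{2i} = 2ρ̂_i − 1; in particular π̂ has the same number of ascents as ρ̂. -/

import Mathlib

/-- The cyclic permutation `τ̂` associated to the one-line notation of `τ`:
it sends `τ i` to `τ (i+1)` (cyclically). -/
def hatPerm {n : ℕ} (τ : Equiv.Perm (Fin n)) : Equiv.Perm (Fin n) :=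
  τ.symm.trans ((finRotate n).trans τ)

/-- The set of ascent positions of `τ` (positions `i` with `τ i < τ (i+1)`). -/
def ascSet {n : ℕ} (τ : Equiv.Perm (Fin n)) : Finset (Fin n) :=
  Finset.univ.filter (fun i => ∃ j : Fin n, (j : ℕ) = (i : ℕ) + 1 ∧ τ i < τ j)

/- Everything is 0-based: position `p : Fin (2*n)` corresponds to the 1-based
index `i = p + 1` (so `i` odd iff `p % 2 = 0`), and a 0-based value `v`
corresponds to the 1-based value `v + 1`.  The defining property
`π_i = 2ρ_i − 1` (`i` odd), `π_i = 2ρ_i` (`i` even), with `ρ_{i+n} = ρ_i`,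
becomes `(π p : ℕ) = 2 * (ρ (p % n) : ℕ) + p % 2`; the conclusion
`π̂_{2i−1} = 2ρ̂_i`, `π̂_{2i} = 2ρ̂_i − 1` becomes
`(π̂ (2u) : ℕ) = 2 * (ρ̂ u : ℕ) + 1` and `(π̂ (2u+1) : ℕ) = 2 * (ρ̂ u : ℕ)`. -/
lemma modInj {n p q : ℕ} (hodd : n % 2 = 1) (hp : p < 2*n) (hq : q < 2*n)
    (h2 : p % 2 = q % 2) (hmn : p % n = q % n) : p = q := by
  have h1 := Nat.div_add_mod p n
  have h2' := Nat.div_add_mod q n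
  have hdp : p / n < 2 := Nat.div_lt_of_lt_mul (by omega)
  have hdq : q / n < 2 := Nat.div_lt_of_lt_mul (by omega)
  rcases Nat.le_one_iff_eq_zero_or_eq_one.mp (Nat.le_of_lt_succ hdp) with h | h <;>
  rcases Nat.le_one_iff_eq_zero_or_eq_one.mp (Nat.le_of_lt_succ hdq) with h' | h' <;>
  rw [h] at h1 <;> rw [h'] at h2' <;> omega

lemma finRotate_val {m : ℕ} (hm : 2 ≤ m) (i : Fin m) :
    ((finRotate m i : Fin m) : ℕ) = ((i : ℕ) + 1) % m := by
  obtain ⟨k, rfl⟩ : ∃ k, m = k + 1 := ⟨m - 1, by omega⟩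
  rw [finRotate_succ_apply, Fin.val_add, Fin.val_one',
    Nat.mod_eq_of_lt (show (1:ℕ) < k+1 by omega)]

lemma rho_congr {n : ℕ} (ρ : Equiv.Perm (Fin n)) {a b : ℕ} (ha : a < n) (hb : b < n)
    (h : a = b) : ((ρ ⟨a, ha⟩ : Fin n) : ℕ) = ((ρ ⟨b, hb⟩ : Fin n) : ℕ) := by subst h; rfl

lemma hatPerm_apply' {m : ℕ} (τ : Equiv.Perm (Fin m)) (x : Fin m) :
    hatPerm τ (τ x) = τ (finRotate m x) := by
  simp [hatPerm]
theorem stmt19 (n : ℕ) (hn : 3 ≤ n) (hodd : Odd n) (ρ : Equiv.Perm (Fin n)) :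
    (∃ π : Equiv.Perm (Fin (2 * n)), ∀ p : Fin (2 * n),
      ((π p : Fin (2 * n)) : ℕ) =
        2 * ((ρ ⟨(p : ℕ) % n, Nat.mod_lt _ (by omega)⟩ : Fin n) : ℕ) + (p : ℕ) % 2) ∧
    (∀ π : Equiv.Perm (Fin (2 * n)),
      (∀ p : Fin (2 * n), ((π p : Fin (2 * n)) : ℕ) =
        2 * ((ρ ⟨(p : ℕ) % n, Nat.mod_lt _ (by omega)⟩ : Fin n) : ℕ) + (p : ℕ) % 2) →
      ((∀ u : Fin n,
          ((hatPerm π ⟨2 * (u : ℕ), by have := u.isLt; omega⟩ : Fin (2 * n)) : ℕ) =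
            2 * ((hatPerm ρ u : Fin n) : ℕ) + 1 ∧
          ((hatPerm π ⟨2 * (u : ℕ) + 1, by have := u.isLt; omega⟩ : Fin (2 * n)) : ℕ) =
            2 * ((hatPerm ρ u : Fin n) : ℕ)) ∧
        (ascSet (hatPerm π)).card = (ascSet (hatPerm ρ)).card)) := by
  have hn2 : n % 2 = 1 := Nat.odd_iff.mp hodd
  constructor
  · -- existence
    have hval : ∀ p : Fin (2*n),
        2 * ((ρ ⟨(p:ℕ) % n, Nat.mod_lt _ (by omega)⟩ : Fin n) : ℕ) + (p:ℕ) % 2 < 2*n := by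
      intro p
      have h1 := (ρ ⟨(p:ℕ) % n, Nat.mod_lt _ (by omega)⟩).isLt
      have h2 : (p:ℕ) % 2 < 2 := Nat.mod_lt _ (by omega)
      omega
    have hinj : Function.Injective (fun p : Fin (2*n) => (⟨_, hval p⟩ : Fin (2*n))) := by
      intro p q h
      have h' : 2 * ((ρ ⟨(p:ℕ) % n, Nat.mod_lt _ (by omega)⟩ : Fin n) : ℕ) + (p:ℕ) % 2 =
          2 * ((ρ ⟨(q:ℕ) % n, Nat.mod_lt _ (by omega)⟩ : Fin n) : ℕ) + (q:ℕ) % 2 :=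
        congrArg Fin.val h
      have hp2 : (p:ℕ) % 2 < 2 := Nat.mod_lt _ (by omega)
      have hq2 : (q:ℕ) % 2 < 2 := Nat.mod_lt _ (by omega)
      have hmod2 : (p:ℕ) % 2 = (q:ℕ) % 2 := by omega
      have hρeq : ((ρ ⟨(p:ℕ) % n, Nat.mod_lt _ (by omega)⟩ : Fin n) : ℕ) =
          ((ρ ⟨(q:ℕ) % n, Nat.mod_lt _ (by omega)⟩ : Fin n) : ℕ) := by omega
      have hmodn : (p:ℕ) % n = (q:ℕ) % n := by
        have := ρ.injective (Fin.ext hρeq : ρ ⟨(p:ℕ) % n, _⟩ = ρ ⟨(q:ℕ) % n, _⟩)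
        exact congrArg Fin.val this
      exact Fin.ext (modInj hn2 p.isLt q.isLt hmod2 hmodn)
    exact ⟨Equiv.ofBijective _ (Finite.injective_iff_bijective.mp hinj), fun p => rfl⟩
  · intro π hp
    -- key computation
    have key : ∀ (p : ℕ) (hplt : p < 2*n),
        ((hatPerm π (π ⟨p, hplt⟩) : Fin (2*n)) : ℕ) =
          2 * ((ρ ⟨(p+1) % n, Nat.mod_lt _ (by omega)⟩ : Fin n) : ℕ) + (p+1) % 2 := by
      intro p hplt
      rw [hatPerm_apply', hp]
      have hfr : ((finRotate (2*n) ⟨p, hplt⟩ : Fin (2*n)) : ℕ) = (p+1) % (2*n) :=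
        finRotate_val (by omega) _
      simp only [hfr]
      have e2 : (p+1) % (2*n) % n = (p+1) % n := Nat.mod_mod_of_dvd _ ⟨2, by ring⟩
      have e3 : (p+1) % (2*n) % 2 = (p+1) % 2 := Nat.mod_mod_of_dvd _ ⟨n, rfl⟩
      rw [rho_congr ρ (Nat.mod_lt _ (by omega)) (Nat.mod_lt _ (by omega)) e2, e3]
    -- hatPerm ρ value
    have hhatρ : ∀ u : Fin n, ((hatPerm ρ u : Fin n) : ℕ) =
        ((ρ ⟨(((ρ.symm u : Fin n) : ℕ) + 1) % n, Nat.mod_lt _ (by omega)⟩ : Fin n) : ℕ) := by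
      intro u
      have h1 : hatPerm ρ u = ρ (finRotate n (ρ.symm u)) := rfl
      have h2 : finRotate n (ρ.symm u) =
          ⟨(((ρ.symm u : Fin n) : ℕ) + 1) % n, Nat.mod_lt _ (by omega)⟩ :=
        Fin.ext (finRotate_val (by omega) _)
      rw [h1, h2]
    -- main pointwise statement
    have main : ∀ u : Fin n,
        ((hatPerm π ⟨2 * (u : ℕ), by have := u.isLt; omega⟩ : Fin (2 * n)) : ℕ) =
          2 * ((hatPerm ρ u : Fin n) : ℕ) + 1 ∧
        ((hatPerm π ⟨2 * (u : ℕ) + 1, by have := u.isLt; omega⟩ : Fin (2 * n)) : ℕ) =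
          2 * ((hatPerm ρ u : Fin n) : ℕ) := by
      intro u
      have hrn : ((ρ.symm u : Fin n) : ℕ) < n := (ρ.symm u).isLt
      have hπval : ∀ (p : ℕ) (hplt : p < 2*n), p % n = ((ρ.symm u : Fin n) : ℕ) →
          ((π ⟨p, hplt⟩ : Fin (2*n)) : ℕ) = 2 * (u : ℕ) + p % 2 := by
        intro p hplt hmodn
        rw [hp]
        have h3 : (⟨p % n, Nat.mod_lt _ (by omega)⟩ : Fin n) = ρ.symm u := Fin.ext hmodn
        rw [h3, Equiv.apply_symm_apply]
      constructor
      · obtain ⟨p₀, hlt, hm2, hmn⟩ : ∃ p₀, p₀ < 2*n ∧ p₀ % 2 = 0 ∧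
            p₀ % n = ((ρ.symm u : Fin n) : ℕ) := by
          rcases Nat.even_or_odd ((ρ.symm u : Fin n) : ℕ) with h | h
          · exact ⟨((ρ.symm u : Fin n) : ℕ), by omega, by have := Nat.even_iff.mp h; omega, Nat.mod_eq_of_lt hrn⟩
          · refine ⟨((ρ.symm u : Fin n) : ℕ) + n, by omega, by have := Nat.odd_iff.mp h; omega, ?_⟩
            rw [Nat.add_mod_right]; exact Nat.mod_eq_of_lt hrn
        have hπ0 : π ⟨p₀, hlt⟩ = ⟨2 * (u:ℕ), by have := u.isLt; omega⟩ := by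
          apply Fin.ext
          rw [hπval p₀ hlt hmn]
          show 2 * (u:ℕ) + p₀ % 2 = 2 * (u:ℕ)
          omega
        rw [← hπ0, key p₀ hlt, hhatρ u]
        have e4 : (p₀+1) % n = (((ρ.symm u : Fin n) : ℕ)+1) % n := by
          rw [Nat.add_mod, hmn, Nat.mod_eq_of_lt (show (1:ℕ) < n by omega)]
        rw [rho_congr ρ (Nat.mod_lt _ (by omega)) (Nat.mod_lt _ (by omega)) e4]
        omega
      · obtain ⟨p₁, hlt, hm2, hmn⟩ : ∃ p₁, p₁ < 2*n ∧ p₁ % 2 = 1 ∧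
            p₁ % n = ((ρ.symm u : Fin n) : ℕ) := by
          rcases Nat.even_or_odd ((ρ.symm u : Fin n) : ℕ) with h | h
          · refine ⟨((ρ.symm u : Fin n) : ℕ) + n, by omega, by have := Nat.even_iff.mp h; omega, ?_⟩
            rw [Nat.add_mod_right]; exact Nat.mod_eq_of_lt hrn
          · exact ⟨((ρ.symm u : Fin n) : ℕ), by omega, by have := Nat.odd_iff.mp h; omega, Nat.mod_eq_of_lt hrn⟩
        have hπ1 : π ⟨p₁, hlt⟩ = ⟨2 * (u:ℕ) + 1, by have := u.isLt; omega⟩ := by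
          apply Fin.ext
          rw [hπval p₁ hlt hmn]
          show 2 * (u:ℕ) + p₁ % 2 = 2 * (u:ℕ) + 1
          omega
        rw [← hπ1, key p₁ hlt, hhatρ u]
        have e4 : (p₁+1) % n = (((ρ.symm u : Fin n) : ℕ)+1) % n := by
          rw [Nat.add_mod, hmn, Nat.mod_eq_of_lt (show (1:ℕ) < n by omega)]
        rw [rho_congr ρ (Nat.mod_lt _ (by omega)) (Nat.mod_lt _ (by omega)) e4]
        omega
    refine ⟨main, ?_⟩
    -- abstract versions
    have hA : ∀ (u : Fin n) (x : Fin (2*n)), (x:ℕ) = 2*(u:ℕ) →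
        ((hatPerm π x : Fin (2*n)) : ℕ) = 2 * ((hatPerm ρ u : Fin n) : ℕ) + 1 := by
      intro u x hx
      have hx' : x = ⟨2*(u:ℕ), by have := u.isLt; omega⟩ := Fin.ext hx
      rw [hx']; exact (main u).1
    have hB : ∀ (u : Fin n) (x : Fin (2*n)), (x:ℕ) = 2*(u:ℕ)+1 →
        ((hatPerm π x : Fin (2*n)) : ℕ) = 2 * ((hatPerm ρ u : Fin n) : ℕ) := by
      intro u x hx
      have hx' : x = ⟨2*(u:ℕ)+1, by have := u.isLt; omega⟩ := Fin.ext hx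
      rw [hx']; exact (main u).2
    have memAsc : ∀ {m : ℕ} (g : Equiv.Perm (Fin m)) (i : Fin m),
        i ∈ ascSet g ↔ ∃ j : Fin m, (j : ℕ) = (i : ℕ) + 1 ∧ g i < g j := by
      intro m g i; simp [ascSet]
    refine (Finset.card_bij
      (fun (u : Fin n) (_ : u ∈ ascSet (hatPerm ρ)) => (⟨2*(u:ℕ)+1, by have := u.isLt; omega⟩ : Fin (2*n))) ?_ ?_ ?_).symm
    · -- maps into ascSet (hatPerm π)
      intro u hu
      obtain ⟨j, hj, hlt⟩ := (memAsc _ _).mp hu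
      have hjn : (j:ℕ) < n := j.isLt
      have hun : (u:ℕ) < n := u.isLt
      rw [memAsc]
      refine ⟨⟨2*(u:ℕ)+2, by omega⟩, by show 2*(u:ℕ)+2 = 2*(u:ℕ)+1+1; omega,
        Fin.lt_def.mpr ?_⟩
      have b1 : ((hatPerm π (⟨2*(u:ℕ)+1, by have := u.isLt; omega⟩ : Fin (2*n)) : Fin (2*n)) : ℕ)
          = 2 * ((hatPerm ρ u : Fin n) : ℕ) := hB u _ rfl
      have a1 : ((hatPerm π (⟨2*(u:ℕ)+2, by omega⟩ : Fin (2*n)) : Fin (2*n)) : ℕ)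
          = 2 * ((hatPerm ρ j : Fin n) : ℕ) + 1 :=
        hA j _ (by show 2*(u:ℕ)+2 = 2*(j:ℕ); omega)
      have hlt' := Fin.lt_def.mp hlt
      omega
    · -- injective
      intro a _ b _ h
      rw [Fin.mk.injEq] at h
      exact Fin.ext (by omega)
    · -- surjective
      intro p hpA
      obtain ⟨j, hj, hlt⟩ := (memAsc _ _).mp hpA
      have hpn : (p:ℕ) < 2*n := p.isLt
      have hjn : (j:ℕ) < 2*n := j.isLt
      have hlt' := Fin.lt_def.mp hlt
      have hodd' : (p:ℕ) % 2 = 1 := by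
        by_contra hcon
        have he : (p:ℕ) % 2 = 0 := by omega
        have b1 : ((hatPerm π p : Fin (2*n)) : ℕ) =
            2 * ((hatPerm ρ ⟨(p:ℕ)/2, by omega⟩ : Fin n) : ℕ) + 1 :=
          hA ⟨(p:ℕ)/2, by omega⟩ p (by show (p:ℕ) = 2*((p:ℕ)/2); omega)
        have b2 : ((hatPerm π j : Fin (2*n)) : ℕ) =
            2 * ((hatPerm ρ ⟨(p:ℕ)/2, by omega⟩ : Fin n) : ℕ) :=
          hB ⟨(p:ℕ)/2, by omega⟩ j (by show (j:ℕ) = 2*((p:ℕ)/2)+1; omega)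
        omega
      -- p is odd, j = p+1 even, j < 2n so p/2 + 1 < n
      have hdiv : (p:ℕ)/2 + 1 < n := by omega
      refine ⟨⟨(p:ℕ)/2, by omega⟩, ?_, Fin.ext (by show 2*((p:ℕ)/2)+1 = (p:ℕ); omega)⟩
      rw [memAsc]
      have b1 : ((hatPerm π p : Fin (2*n)) : ℕ) =
          2 * ((hatPerm ρ ⟨(p:ℕ)/2, by omega⟩ : Fin n) : ℕ) :=
        hB ⟨(p:ℕ)/2, by omega⟩ p (by show (p:ℕ) = 2*((p:ℕ)/2)+1; omega)
      have b2 : ((hatPerm π j : Fin (2*n)) : ℕ) =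
          2 * ((hatPerm ρ ⟨(p:ℕ)/2+1, hdiv⟩ : Fin n) : ℕ) + 1 :=
        hA ⟨(p:ℕ)/2+1, hdiv⟩ j (by show (j:ℕ) = 2*((p:ℕ)/2+1); omega)
      refine ⟨⟨(p:ℕ)/2+1, hdiv⟩, by show (p:ℕ)/2+1 = (p:ℕ)/2+1; rfl, Fin.lt_def.mpr ?_⟩
      have hneq : ((hatPerm ρ ⟨(p:ℕ)/2, by omega⟩ : Fin n) : ℕ) ≠
          ((hatPerm ρ ⟨(p:ℕ)/2+1, hdiv⟩ : Fin n) : ℕ) := by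
        intro hcon
        have h5 := (hatPerm ρ).injective (Fin.ext hcon)
        rw [Fin.mk.injEq] at h5
        omega
      omega
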